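/- Let k be a field and let A be a field which is a k-algebra of finite expansion. Then A is algebraic over k. -/

import Mathlib

/-- An `R`-algebra `A` is of *finite expansion* if it is integral over a finitely
generated subalgebra, i.e. there is a finite set of quasi-generators. -/
def Algebra.FiniteExpansion (R A : Type*) [CommRing R] [CommRing A] [Algebra R A] : Prop :=
  ∃ s : Finset A, Algebra.IsIntegral (Algebra.adjoin R (s : Set A)) A

/-- A field which is an algebra of finite expansion over a field `k` is algebraic over `k`. -/
theorem Algebra.IsAlgebraic.of_finiteExpansion (k A : Type*) [Field k] [Field A] [Algebra k A]
    (h : Algebra.FiniteExpansion k A) : Algebra.IsAlgebraic k A := by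
  obtain ⟨s, hs⟩ := h
  set B := Algebra.adjoin k (s : Set A) with hBdef
  have hBfield : IsField B :=
    isField_of_isIntegral_of_isField (S := A) Subtype.val_injective (Field.toIsField A)
  letI : Field B := hBfield.toField
  haveI : Algebra.FiniteType k B := by
    rw [← Subalgebra.fg_iff_finiteType]
    exact (Subalgebra.fg_adjoin_finset s)
  haveI : Module.Finite k B := finite_of_finite_type_of_isJacobsonRing k B
  haveI : Algebra.IsAlgebraic k B := Algebra.IsAlgebraic.of_finite k B
  haveI : Algebra.IsAlgebraic B A := hs.isAlgebraic
  exact Algebra.IsAlgebraic.trans (S := B) k A
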